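/- For all integers n ≥ R ≥ 2 one has ∫_{Λ_n} q(‖x‖ − R)² dx ≤ 8(R+3)² + 8R·Q(n−R), where the integral is with respect to Lebesgue measure on ℝ². -/

import Mathlib

/-- `q(s) = 1` for `s ≤ 2`, and `q(s) = 1/(s·log s)` for `s > 2`. -/
noncomputable def q (s : ℝ) : ℝ := if s ≤ 2 then 1 else 1 / (s * Real.log s)

/-- `Q(k) = ∫_0^k q(s) ds`. -/
noncomputable def Q (k : ℝ) : ℝ := ∫ s in (0:ℝ)..k, q s

/-- The square `Λ_n = [-n, n)² ⊆ ℝ²`. -/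
def Lambda (n : ℤ) : Set (Fin 2 → ℝ) :=
  Set.pi Set.univ (fun _ => Set.Ico (-(n : ℝ)) (n : ℝ))

open MeasureTheory Set
open scoped ENNReal


lemma log_ge_point6 {s : ℝ} (h : 2 < s) : (0.6:ℝ) ≤ Real.log s := by
  have hl : Real.log 2 ≤ Real.log s := Real.log_le_log (by norm_num) h.le
  have h5 : Real.exp 0.6 ^ 5 = Real.exp 1 ^ 3 := by
    rw [← Real.exp_nat_mul, ← Real.exp_nat_mul]; norm_num
  have h2 : (0.6:ℝ) ≤ Real.log 2 := by
    rw [Real.le_log_iff_exp_le (by norm_num)]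
    by_contra hc
    push_neg at hc
    have h32 : ((2:ℝ))^5 < Real.exp 0.6 ^ 5 := pow_lt_pow_left₀ hc (by norm_num) (by norm_num)
    have h33 : Real.exp 1 ^ 3 < (2.7182818286:ℝ)^3 :=
      pow_lt_pow_left₀ Real.exp_one_lt_d9 (Real.exp_pos 1).le (by norm_num)
    rw [h5] at h32
    norm_num at h32 h33
    linarith
  linarith

lemma log_ge_one {s : ℝ} (h : 3 ≤ s) : (1:ℝ) ≤ Real.log s := by
  have hl : Real.log 3 ≤ Real.log s := Real.log_le_log (by norm_num) h
  have : (1:ℝ) ≤ Real.log 3 := by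
    rw [Real.le_log_iff_exp_le (by norm_num)]
    nlinarith [Real.exp_one_lt_d9]
  linarith

lemma q_nonneg (s : ℝ) : 0 ≤ q s := by
  unfold q
  split_ifs with h
  · norm_num
  · push_neg at h
    have h6 := log_ge_point6 h
    positivity

lemma q_le_one (s : ℝ) : q s ≤ 1 := by
  unfold q
  split_ifs with h
  · exact le_refl 1
  · push_neg at h
    have h6 := log_ge_point6 h
    rw [div_le_one (by nlinarith)]
    nlinarith

lemma q_eq_of_gt {s : ℝ} (h : 2 < s) : q s = 1 / (s * Real.log s) := by
  unfold q; rw [if_neg (not_le.2 h)]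

lemma q_meas : Measurable q := by
  unfold q
  exact Measurable.ite (measurableSet_le measurable_id measurable_const)
    measurable_const ((measurable_const.div ((measurable_id.mul Real.measurable_log))))

lemma norm_fin_two (x : Fin 2 → ℝ) : ‖x‖ = max |x 0| |x 1| := by
  have h : ‖x‖₊ = ‖x 0‖₊ ⊔ ‖x 1‖₊ := by
    rw [Pi.nnnorm_def]
    rw [show (Finset.univ : Finset (Fin 2)) = {0, 1} by decide]
    simp [Finset.sup_insert, Finset.sup_singleton]
  have := congrArg (fun y : NNReal => (y : ℝ)) h
  simpa [Real.norm_eq_abs, NNReal.coe_max] using this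

-- key pointwise bound for s = |a|-R > 3 (i.e. |a| > R+3):
lemma key_pw {R s : ℝ} (hR : 2 ≤ R) (hs : 3 < s) :
    (s + R) * q s ^ 2 ≤ R * q s := by
  have h2 : 2 < s := by linarith
  have hlog := log_ge_one (le_of_lt hs)
  have hq := q_eq_of_gt h2
  rw [hq]
  have hpos : 0 < s * Real.log s := by nlinarith
  rw [div_pow, one_pow, mul_one_div, mul_one_div, div_le_div_iff₀ (by positivity) hpos]
  have hkey : (s + R) ≤ R * (s * Real.log s) := by
    have h1 : R * s * 1 ≤ R * s * Real.log s :=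
      mul_le_mul_of_nonneg_left hlog (by nlinarith)
    nlinarith [mul_nonneg (show (0:ℝ) ≤ R - 2 by linarith) (show (0:ℝ) ≤ s - 3 by linarith)]
  calc (s + R) * (s * Real.log s) ≤ R * (s * Real.log s) * (s * Real.log s) := by
        nlinarith
    _ = R * (s * Real.log s) ^ 2 := by ring


lemma q_integrableOn (s : Set ℝ) (h : volume s ≠ ⊤) : IntegrableOn q s := by
  apply Measure.integrableOn_of_bounded h (q_meas.aestronglyMeasurable)
  filter_upwards with x
  rw [Real.norm_eq_abs, abs_of_nonneg (q_nonneg x)]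
  exact q_le_one x

lemma Q_nonneg {k : ℝ} (hk : 0 ≤ k) : 0 ≤ Q k :=
  intervalIntegral.integral_nonneg hk (fun s _ => q_nonneg s)

-- the tail estimate
lemma tail_est {r k : ℝ} (hk : 0 ≤ k) (c : ℝ) (hc : 0 ≤ c) :
    ∫⁻ a in Ioc (r+3) (r+k), ENNReal.ofReal (c * q (a - r)) ≤ ENNReal.ofReal (c * Q k) := by
  have hshift : ∫⁻ a in Ioc (r+3) (r+k), ENNReal.ofReal (c * q (a - r))
      = ∫⁻ s in Ioc 3 k, ENNReal.ofReal (c * q s) := by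
    have hmp := measurePreserving_add_right (volume : Measure ℝ) r
    have hemb : MeasurableEmbedding (fun x : ℝ => x + r) :=
      (Homeomorph.addRight r).measurableEmbedding
    have := hmp.setLIntegral_comp_preimage_emb hemb
      (fun a => ENNReal.ofReal (c * q (a - r))) (Ioc (r+3) (r+k))
    rw [← this]
    have hpre : (fun x : ℝ => x + r) ⁻¹' Ioc (r+3) (r+k) = Ioc 3 k := by
      ext x; simp [Set.mem_Ioc]
    rw [hpre]
    apply setLIntegral_congr_fun measurableSet_Ioc
    intro x _
    ring_nf
  rw [hshift]
  calc ∫⁻ s in Ioc 3 k, ENNReal.ofReal (c * q s)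
      ≤ ∫⁻ s in Ioc 0 k, ENNReal.ofReal (c * q s) :=
        lintegral_mono_set (Set.Ioc_subset_Ioc_left (by norm_num))
    _ = ENNReal.ofReal (∫ s in Ioc 0 k, c * q s) := by
        rw [ofReal_integral_eq_lintegral_ofReal]
        · exact (q_integrableOn _ (by simp)).const_mul c
        · filter_upwards with x; exact mul_nonneg hc (q_nonneg x)
    _ = ENNReal.ofReal (c * Q k) := by
        rw [MeasureTheory.integral_const_mul]
        congr 1
        rw [Q, intervalIntegral.integral_of_le hk]


lemma pw_bound {r : ℝ} (hr : 2 ≤ r) (a : ℝ) :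
    ENNReal.ofReal (2*|a| * q (|a|-r)^2)
      ≤ (Icc (-(r+3)) (r+3)).indicator (fun _ => ENNReal.ofReal (2*(r+3))) a
        + {x : ℝ | r+3 < |x|}.indicator (fun x => ENNReal.ofReal (2*r * q (|x|-r))) a := by
  rcases le_or_gt (|a|) (r+3) with h | h
  · have ha : a ∈ Icc (-(r+3)) (r+3) := by
      rw [Set.mem_Icc]; constructor <;> [linarith [neg_abs_le a]; linarith [le_abs_self a]]
    rw [Set.indicator_of_mem ha]
    refine le_add_of_le_of_nonneg (ENNReal.ofReal_le_ofReal ?_) zero_le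
    have h1 := q_nonneg (|a|-r)
    have h2 := q_le_one (|a|-r)
    have h3 := abs_nonneg a
    have hq2 : q (|a|-r)^2 ≤ 1 := by nlinarith
    nlinarith [mul_le_mul_of_nonneg_left hq2 (by positivity : (0:ℝ) ≤ 2*|a|)]
  · have ha : a ∈ {x : ℝ | r+3 < |x|} := h
    rw [Set.indicator_of_mem ha]
    refine le_add_of_nonneg_of_le zero_le (ENNReal.ofReal_le_ofReal ?_)
    have hs : 3 < |a| - r := by linarith
    have := key_pw hr hs
    calc 2*|a| * q (|a|-r)^2 = 2 * ((|a| - r + r) * q (|a|-r)^2) := by ring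
      _ ≤ 2 * (r * q (|a|-r)) := by linarith
      _ = 2*r * q (|a|-r) := by ring

lemma oneD {r n : ℝ} (hr : 2 ≤ r) (hn : r ≤ n) :
    ∫⁻ a in Ico (-n) n, ENNReal.ofReal (2*|a| * q (|a| - r)^2)
      ≤ ENNReal.ofReal (4*(r+3)^2 + 4*r*Q (n-r)) := by
  set g : ℝ → ℝ≥0∞ := fun x => ENNReal.ofReal (2*r * q (|x|-r)) with hg
  have hA : MeasurableSet (Icc (-(r+3)) (r+3)) := measurableSet_Icc
  have hB : MeasurableSet {x : ℝ | r+3 < |x|} :=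
    measurableSet_lt measurable_const measurable_id.abs
  have hgm : Measurable g :=
    (ENNReal.measurable_ofReal).comp
      (measurable_const.mul (q_meas.comp (measurable_id.abs.sub measurable_const)))
  have step1 : ∫⁻ a in Ico (-n) n, ENNReal.ofReal (2*|a| * q (|a| - r)^2)
      ≤ (∫⁻ a in Ico (-n) n, (Icc (-(r+3)) (r+3)).indicator
            (fun _ => ENNReal.ofReal (2*(r+3))) a)
        + ∫⁻ a in Ico (-n) n, {x : ℝ | r+3 < |x|}.indicator g a := by
    rw [← lintegral_add_left ((measurable_const.indicator hA))]
    exact lintegral_mono (pw_bound hr)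
  have term1 : (∫⁻ a in Ico (-n) n, (Icc (-(r+3)) (r+3)).indicator
        (fun _ => ENNReal.ofReal (2*(r+3))) a) ≤ ENNReal.ofReal (4*(r+3)^2) := by
    rw [lintegral_indicator hA, setLIntegral_const]
    calc ENNReal.ofReal (2*(r+3)) * (volume.restrict (Ico (-n) n)) (Icc (-(r+3)) (r+3))
        ≤ ENNReal.ofReal (2*(r+3)) * volume (Icc (-(r+3)) (r+3)) := by
          gcongr
          exact Measure.restrict_le_self
      _ = ENNReal.ofReal (2*(r+3)) * ENNReal.ofReal (2*(r+3)) := by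
          rw [Real.volume_Icc]; ring_nf
      _ = ENNReal.ofReal (4*(r+3)^2) := by
          rw [← ENNReal.ofReal_mul (by linarith)]; ring_nf
  have negpre : (fun x : ℝ => -x) ⁻¹' (Ico (-n) (-(r+3))) = Ioc (r+3) n := by
    ext x
    simp only [Set.mem_preimage, Set.mem_Ico, Set.mem_Ioc]
    constructor <;> intro h <;> exact ⟨by linarith [h.1, h.2], by linarith [h.1, h.2]⟩
  have posp : ∫⁻ a in Ioc (r+3) n, g a ≤ ENNReal.ofReal (2*r * Q (n-r)) := by
    have habs : ∫⁻ a in Ioc (r+3) n, g a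
        = ∫⁻ a in Ioc (r+3) n, ENNReal.ofReal (2*r * q (a-r)) := by
      apply setLIntegral_congr_fun measurableSet_Ioc
      intro x hx
      have hxx : |x| = x := abs_of_pos (by linarith [hx.1])
      simp [hg, hxx]
    have ht := tail_est (r := r) (show (0:ℝ) ≤ n - r by linarith) (2*r) (show (0:ℝ) ≤ 2*r by linarith)
    rw [show r + (n - r) = n by ring] at ht
    rw [habs]
    exact ht
  have negp : ∫⁻ a in Ico (-n) (-(r+3)), g a ≤ ENNReal.ofReal (2*r * Q (n-r)) := by
    have hmp := Measure.measurePreserving_neg (volume : Measure ℝ)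
    have hemb : MeasurableEmbedding (fun x : ℝ => -x) :=
      (Homeomorph.neg ℝ).measurableEmbedding
    have := hmp.setLIntegral_comp_preimage_emb hemb g (Ico (-n) (-(r+3)))
    rw [← this, negpre]
    have : ∫⁻ x in Ioc (r+3) n, g (-x) = ∫⁻ x in Ioc (r+3) n, g x := by
      apply setLIntegral_congr_fun measurableSet_Ioc
      intro x _
      simp [hg, abs_neg]
    rw [this]
    exact posp
  have term2 : ∫⁻ a in Ico (-n) n, {x : ℝ | r+3 < |x|}.indicator g a
      ≤ ENNReal.ofReal (4*r*Q (n-r)) := by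
    rw [lintegral_indicator hB, Measure.restrict_restrict hB]
    have hsub : {x : ℝ | r+3 < |x|} ∩ Ico (-n) n
        ⊆ Ico (-n) (-(r+3)) ∪ Ioc (r+3) n := by
      rintro x ⟨hx1, hx2, hx3⟩
      simp only [Set.mem_setOf_eq] at hx1
      rcases abs_cases x with ⟨he, _⟩ | ⟨he, _⟩
      · right; rw [he] at hx1; exact ⟨hx1, hx3.le⟩
      · left; rw [he] at hx1; exact ⟨hx2, by linarith⟩
    calc ∫⁻ a in {x : ℝ | r+3 < |x|} ∩ Ico (-n) n, g a
        ≤ ∫⁻ a in Ico (-n) (-(r+3)) ∪ Ioc (r+3) n, g a := lintegral_mono_set hsub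
      _ ≤ (∫⁻ a in Ico (-n) (-(r+3)), g a) + ∫⁻ a in Ioc (r+3) n, g a :=
          lintegral_union_le _ _ _
      _ ≤ ENNReal.ofReal (2*r * Q (n-r)) + ENNReal.ofReal (2*r * Q (n-r)) :=
          add_le_add negp posp
      _ = ENNReal.ofReal (4*r*Q (n-r)) := by
          have hQ := Q_nonneg (show (0:ℝ) ≤ n - r by linarith)
          rw [← ENNReal.ofReal_add (by nlinarith) (by nlinarith)]
          ring_nf
  calc ∫⁻ a in Ico (-n) n, ENNReal.ofReal (2*|a| * q (|a| - r)^2)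
      ≤ _ := step1
    _ ≤ ENNReal.ofReal (4*(r+3)^2) + ENNReal.ofReal (4*r*Q (n-r)) := add_le_add term1 term2
    _ = ENNReal.ofReal (4*(r+3)^2 + 4*r*Q (n-r)) := by
        have hQ := Q_nonneg (show (0:ℝ) ≤ n - r by linarith)
        rw [← ENNReal.ofReal_add (by positivity) (by nlinarith)]

/-- For all integers `n ≥ R ≥ 2`, `∫_{Λ_n} q(‖x‖ - R)² dx ≤ 8(R+3)² + 8R·Q(n-R)`,
where `‖·‖` is the maximum norm on `ℝ²` and the integral is with respect to Lebesgue
measure. -/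
theorem stmt_6 (R n : ℤ) (hR : 2 ≤ R) (hn : R ≤ n) :
    ∫ x in Lambda n, q (‖x‖ - (R : ℝ)) ^ 2 ≤
      8 * ((R : ℝ) + 3) ^ 2 + 8 * (R : ℝ) * Q ((n : ℝ) - (R : ℝ)) := by
  set r : ℝ := (R : ℝ) with hrdef
  set m : ℝ := (n : ℝ) with hmdef
  have hr : (2:ℝ) ≤ r := by rw [hrdef]; exact_mod_cast hR
  have hnm : r ≤ m := by rw [hrdef, hmdef]; exact_mod_cast hn
  have hQ : 0 ≤ Q (m - r) := Q_nonneg (by linarith)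
  have hRHS : (0:ℝ) ≤ 8 * (r + 3) ^ 2 + 8 * r * Q (m - r) := by nlinarith
  have hFm : Measurable (fun x : Fin 2 → ℝ => q (‖x‖ - r) ^ 2) :=
    (q_meas.comp (measurable_norm.sub measurable_const)).pow_const 2
  rw [MeasureTheory.integral_eq_lintegral_of_nonneg_ae
      (Filter.Eventually.of_forall (fun x => sq_nonneg (q (‖x‖ - r))))
      hFm.aestronglyMeasurable]
  apply ENNReal.toReal_le_of_le_ofReal hRHS
  -- move to product space
  set I : Set ℝ := Ico (-m) m with hI
  set G : ℝ × ℝ → ℝ≥0∞ := fun p => ENNReal.ofReal (q (max |p.1| |p.2| - r) ^ 2) with hG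
  have hstep : ∫⁻ x in Lambda n, ENNReal.ofReal (q (‖x‖ - r) ^ 2)
      = ∫⁻ p in I ×ˢ I, G p := by
    have hmp := (volume_preserving_finTwoArrow ℝ).symm
    have hemb := (MeasurableEquiv.finTwoArrow (α := ℝ)).symm.measurableEmbedding
    have h := hmp.setLIntegral_comp_preimage_emb hemb
      (fun x : Fin 2 → ℝ => ENNReal.ofReal (q (‖x‖ - r) ^ 2)) (Lambda n)
    rw [← h]
    have hpre : (MeasurableEquiv.finTwoArrow (α := ℝ)).symm ⁻¹' (Lambda n) = I ×ˢ I := by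
      ext p
      simp [Lambda, Set.mem_univ_pi, Fin.forall_fin_two, MeasurableEquiv.finTwoArrow,
        Set.mem_prod, hI, hmdef]
    rw [hpre]
    apply lintegral_congr
    intro p
    rw [hG]
    congr 2
    rw [norm_fin_two]
    simp [MeasurableEquiv.finTwoArrow]
  rw [hstep]
  -- the two dominating functions
  set D1 : Set (ℝ × ℝ) := {p | |p.2| ≤ |p.1|} with hD1def
  set D2 : Set (ℝ × ℝ) := {p | |p.1| ≤ |p.2|} with hD2def
  have hD1 : MeasurableSet D1 := measurableSet_le measurable_snd.abs measurable_fst.abs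
  have hD2 : MeasurableSet D2 := measurableSet_le measurable_fst.abs measurable_snd.abs
  set H1 : ℝ × ℝ → ℝ≥0∞ :=
    fun p => ENNReal.ofReal (q (|p.1| - r) ^ 2) * D1.indicator 1 p with hH1def
  set H2 : ℝ × ℝ → ℝ≥0∞ :=
    fun p => ENNReal.ofReal (q (|p.2| - r) ^ 2) * D2.indicator 1 p with hH2def
  have hH1m : Measurable H1 :=
    ((ENNReal.measurable_ofReal).comp
      ((q_meas.comp (measurable_fst.abs.sub measurable_const)).pow_const 2)).mul
      (measurable_one.indicator hD1)
  have hH2m : Measurable H2 :=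
    ((ENNReal.measurable_ofReal).comp
      ((q_meas.comp (measurable_snd.abs.sub measurable_const)).pow_const 2)).mul
      (measurable_one.indicator hD2)
  have hpt : ∀ p : ℝ × ℝ, G p ≤ H1 p + H2 p := by
    intro p
    rcases le_total |p.2| |p.1| with h | h
    · have hmax : max |p.1| |p.2| = |p.1| := max_eq_left h
      have h1 : H1 p = ENNReal.ofReal (q (|p.1| - r) ^ 2) := by
        rw [hH1def]
        simp only
        rw [Set.indicator_of_mem (show p ∈ D1 from h)]
        simp
      rw [hG]
      simp only [hmax]
      rw [← h1]
      exact le_self_add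
    · have hmax : max |p.1| |p.2| = |p.2| := max_eq_right h
      have h2 : H2 p = ENNReal.ofReal (q (|p.2| - r) ^ 2) := by
        rw [hH2def]
        simp only
        rw [Set.indicator_of_mem (show p ∈ D2 from h)]
        simp
      rw [hG]
      simp only [hmax]
      rw [← h2]
      exact le_add_self
  -- section computation
  have hsec1 : ∀ a b : ℝ, D1.indicator (1 : ℝ × ℝ → ℝ≥0∞) (a, b)
      = (Icc (-|a|) |a|).indicator (1 : ℝ → ℝ≥0∞) b := by
    intro a b
    by_cases h : |b| ≤ |a|
    · rw [Set.indicator_of_mem (show (a, b) ∈ D1 from h),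
        Set.indicator_of_mem (Set.mem_Icc.mpr (abs_le.mp h))]
      rfl
    · rw [Set.indicator_of_notMem (show (a, b) ∉ D1 from h),
        Set.indicator_of_notMem (fun hc => h (abs_le.mpr (Set.mem_Icc.mp hc)))]
  have hsec2 : ∀ a b : ℝ, D2.indicator (1 : ℝ × ℝ → ℝ≥0∞) (a, b)
      = (Icc (-|b|) |b|).indicator (1 : ℝ → ℝ≥0∞) a := by
    intro a b
    by_cases h : |a| ≤ |b|
    · rw [Set.indicator_of_mem (show (a, b) ∈ D2 from h),
        Set.indicator_of_mem (Set.mem_Icc.mpr (abs_le.mp h))]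
      rfl
    · rw [Set.indicator_of_notMem (show (a, b) ∉ D2 from h),
        Set.indicator_of_notMem (fun hc => h (abs_le.mpr (Set.mem_Icc.mp hc)))]
  have hcube : ∀ a : ℝ, (volume.restrict I) (Icc (-|a|) |a|) ≤ ENNReal.ofReal (2 * |a|) := by
    intro a
    rw [Measure.restrict_apply measurableSet_Icc]
    calc volume (Icc (-|a|) |a| ∩ I) ≤ volume (Icc (-|a|) |a|) :=
          measure_mono Set.inter_subset_left
      _ = ENNReal.ofReal (|a| - (-|a|)) := Real.volume_Icc
      _ = ENNReal.ofReal (2 * |a|) := by ring_nf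
  have hind : ∀ c : ℝ, ∫⁻ b, (Icc (-c) c).indicator (1 : ℝ → ℝ≥0∞) b ∂(volume.restrict I)
      = (volume.restrict I) (Icc (-c) c) := fun c => lintegral_indicator_one measurableSet_Icc
  have hone := oneD hr hnm
  have hT1 : ∫⁻ p in I ×ˢ I, H1 p ≤ ENNReal.ofReal (4*(r+3)^2 + 4*r*Q (m-r)) := by
    rw [MeasureTheory.Measure.volume_eq_prod, ← Measure.prod_restrict,
      lintegral_prod _ hH1m.aemeasurable]
    calc ∫⁻ a, ∫⁻ b, H1 (a, b) ∂(volume.restrict I) ∂(volume.restrict I)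
        ≤ ∫⁻ a, ENNReal.ofReal (2*|a| * q (|a| - r)^2) ∂(volume.restrict I) := by
          apply lintegral_mono
          intro a
          rw [hH1def]
          simp only
          rw [lintegral_const_mul _ (by
            exact (measurable_one.indicator hD1).comp (measurable_prodMk_left))]
          calc ENNReal.ofReal (q (|a| - r) ^ 2) *
                ∫⁻ b, D1.indicator 1 (a, b) ∂(volume.restrict I)
              = ENNReal.ofReal (q (|a| - r) ^ 2) *
                ∫⁻ b, (Icc (-|a|) |a|).indicator (1 : ℝ → ℝ≥0∞) b ∂(volume.restrict I) := by
                congr 1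
                exact lintegral_congr (fun b => hsec1 a b)
            _ ≤ ENNReal.ofReal (q (|a| - r) ^ 2) * ENNReal.ofReal (2 * |a|) := by
                rw [hind]
                exact mul_le_mul_right (hcube a) _
            _ = ENNReal.ofReal (2*|a| * q (|a| - r)^2) := by
                rw [← ENNReal.ofReal_mul (sq_nonneg _)]
                ring_nf
      _ ≤ ENNReal.ofReal (4*(r+3)^2 + 4*r*Q (m-r)) := hone
  have hT2 : ∫⁻ p in I ×ˢ I, H2 p ≤ ENNReal.ofReal (4*(r+3)^2 + 4*r*Q (m-r)) := by
    rw [MeasureTheory.Measure.volume_eq_prod, ← Measure.prod_restrict,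
      lintegral_prod_symm _ hH2m.aemeasurable]
    calc ∫⁻ b, ∫⁻ a, H2 (a, b) ∂(volume.restrict I) ∂(volume.restrict I)
        ≤ ∫⁻ b, ENNReal.ofReal (2*|b| * q (|b| - r)^2) ∂(volume.restrict I) := by
          apply lintegral_mono
          intro b
          rw [hH2def]
          simp only
          rw [lintegral_const_mul _ (by
            exact (measurable_one.indicator hD2).comp (measurable_prodMk_right))]
          calc ENNReal.ofReal (q (|b| - r) ^ 2) *
                ∫⁻ a, D2.indicator 1 (a, b) ∂(volume.restrict I)
              = ENNReal.ofReal (q (|b| - r) ^ 2) *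
                ∫⁻ a, (Icc (-|b|) |b|).indicator (1 : ℝ → ℝ≥0∞) a ∂(volume.restrict I) := by
                congr 1
                exact lintegral_congr (fun a => hsec2 a b)
            _ ≤ ENNReal.ofReal (q (|b| - r) ^ 2) * ENNReal.ofReal (2 * |b|) := by
                rw [hind]
                exact mul_le_mul_right (hcube b) _
            _ = ENNReal.ofReal (2*|b| * q (|b| - r)^2) := by
                rw [← ENNReal.ofReal_mul (sq_nonneg _)]
                ring_nf
      _ ≤ ENNReal.ofReal (4*(r+3)^2 + 4*r*Q (m-r)) := hone
  calc ∫⁻ p in I ×ˢ I, G p ≤ ∫⁻ p in I ×ˢ I, (H1 p + H2 p) := lintegral_mono hpt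
    _ = (∫⁻ p in I ×ˢ I, H1 p) + ∫⁻ p in I ×ˢ I, H2 p := lintegral_add_left hH1m _
    _ ≤ ENNReal.ofReal (4*(r+3)^2 + 4*r*Q (m-r)) + ENNReal.ofReal (4*(r+3)^2 + 4*r*Q (m-r)) :=
        add_le_add hT1 hT2
    _ = ENNReal.ofReal (8 * (r + 3) ^ 2 + 8 * r * Q (m - r)) := by
        rw [← ENNReal.ofReal_add (by nlinarith) (by nlinarith)]
        ring_nf
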